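/- Let n ≥ 1 and let G = (V,E) and G' = (V',E') be finite connected simple graphs, each with at least one edge and with |V| ≤ n and |V'| ≤ n, and let ℓ ≥ 4n³. Let μ be the law of the pair of encodings (id_W^ℓ, adj_W^ℓ) of a uniform-start simple random walk W of length ℓ on G, and let μ' be the corresponding law for G'. If μ = μ', then G and G' are isomorphic. -/

import Mathlib

/-- The identity encoding of a walk `w` of length `ℓ` with window size `ℓ`:
`idEnc w i j = true` iff `i - j ≥ 1` and `w i = w (i - j - 1)`. -/
def idEnc {V : Type*} [DecidableEq V] {ℓ : ℕ} (w : Fin (ℓ + 1) → V) :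
    Fin (ℓ + 1) → Fin ℓ → Bool := fun i j =>
  decide ((j : ℕ) + 1 ≤ (i : ℕ) ∧
    w i = w ⟨(i : ℕ) - (j : ℕ) - 1,
      lt_of_le_of_lt (le_trans (Nat.sub_le _ _) (Nat.sub_le _ _)) i.isLt⟩)

/-- The adjacency encoding of a walk `w` of length `ℓ` with window size `ℓ`:
`adjEnc G w i j = true` iff `i - j ≥ 1` and `w i` is adjacent to `w (i - j - 1)`. -/
def adjEnc {V : Type*} (G : SimpleGraph V) [DecidableRel G.Adj] {ℓ : ℕ}
    (w : Fin (ℓ + 1) → V) : Fin (ℓ + 1) → Fin ℓ → Bool := fun i j =>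
  decide ((j : ℕ) + 1 ≤ (i : ℕ) ∧
    G.Adj (w i) (w ⟨(i : ℕ) - (j : ℕ) - 1,
      lt_of_le_of_lt (le_trans (Nat.sub_le _ _) (Nat.sub_le _ _)) i.isLt⟩))

/-- The probability that the uniform-start simple random walk of length `ℓ` on `G`
equals the vertex sequence `w`. -/
noncomputable def walkProb {V : Type*} [Fintype V] (G : SimpleGraph V) [DecidableRel G.Adj]
    {ℓ : ℕ} (w : Fin (ℓ + 1) → V) : ℝ :=
  (Fintype.card V : ℝ)⁻¹ *
    ∏ i : Fin ℓ,
      (if G.Adj (w i.castSucc) (w i.succ)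
        then ((G.degree (w i.castSucc) : ℝ))⁻¹ else 0)

/-- The law of the pair of encodings `(id_W^ℓ, adj_W^ℓ)` of the uniform-start simple
random walk `W` of length `ℓ` on `G`, as a function assigning to each possible pair of
encodings its probability. -/
noncomputable def encLaw {V : Type*} [Fintype V] [DecidableEq V] (G : SimpleGraph V)
    [DecidableRel G.Adj] (ℓ : ℕ) :
    ((Fin (ℓ + 1) → Fin ℓ → Bool) × (Fin (ℓ + 1) → Fin ℓ → Bool)) → ℝ := fun e =>
  ∑ w : Fin (ℓ + 1) → V, if (idEnc w, adjEnc G w) = e then walkProb G w else 0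

open SimpleGraph

/-- Every vertex of a connected graph with an edge has a neighbor. -/
lemma exists_adj_of_connected {V : Type*} (G : SimpleGraph V)
    (hconn : G.Connected) (hedge : G.edgeSet.Nonempty) (v : V) : ∃ u, G.Adj v u := by
  obtain ⟨e, he⟩ := hedge
  induction e with
  | h a b =>
    simp only [mem_edgeSet] at he
    rcases eq_or_ne v a with rfl | hva
    · exact ⟨b, he⟩
    · obtain ⟨p⟩ := hconn.preconnected v a
      have hlen : 0 < p.length := by
        rcases Nat.eq_zero_or_pos p.length with h0 | h
        · exfalso
          apply hva
          have h1 := p.getVert_zero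
          have h2 := p.getVert_length
          rw [h0] at h2
          rw [h1] at h2
          exact h2
        · exact h
      exact ⟨p.getVert 1, by simpa using p.adj_getVert_succ hlen⟩

/-- A covering walk from a fixed vertex, covering a finset, with bounded length. -/
lemma exists_cover_finset {V : Type*} [Fintype V] [DecidableEq V] (G : SimpleGraph V)
    (hconn : G.Connected) (a : V) (s : Finset V) :
    ∃ (b : V) (p : G.Walk a b), (∀ v ∈ s, v ∈ p.support) ∧
      p.length ≤ s.card * Fintype.card V := by
  classical
  induction s using Finset.induction_on with
  | empty => exact ⟨a, SimpleGraph.Walk.nil, by simp, by simp⟩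
  | @insert x s hx ih =>
    obtain ⟨b, p, hp, hlen⟩ := ih
    obtain ⟨q⟩ := hconn.preconnected b x
    set q' := q.toPath
    refine ⟨x, p.append q'.1, ?_, ?_⟩
    · intro v hv
      rw [Walk.mem_support_append_iff]
      rcases Finset.mem_insert.mp hv with rfl | hv
      · exact Or.inr (q'.1.end_mem_support)
      · exact Or.inl (hp v hv)
    · rw [Walk.length_append, Finset.card_insert_of_notMem hx]
      have h2 := q'.2.length_lt
      have h3 : (s.card + 1) * Fintype.card V = s.card * Fintype.card V + Fintype.card V := by
        ring
      omega

/-- A covering walk of any prescribed length `≥ card²`. -/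
lemma exists_covering_walk {V : Type*} [Fintype V] [DecidableEq V] (G : SimpleGraph V)
    (hconn : G.Connected) (hedge : G.edgeSet.Nonempty) (ℓ : ℕ)
    (hℓ : Fintype.card V * Fintype.card V ≤ ℓ) :
    ∃ (a b : V) (p : G.Walk a b), (∀ v, v ∈ p.support) ∧ p.length = ℓ := by
  classical
  have : Nonempty V := hconn.nonempty
  obtain ⟨a⟩ := this
  obtain ⟨b, p, hp, hlen⟩ := exists_cover_finset G hconn a Finset.univ
  have hlen' : p.length ≤ ℓ := le_trans (by simpa using hlen) hℓ
  have ext : ∀ k, ∃ (c : V) (q : G.Walk a c), (∀ v, v ∈ q.support) ∧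
      q.length = p.length + k := by
    intro k
    induction k with
    | zero => exact ⟨b, p, fun v => hp v (Finset.mem_univ v), by simp⟩
    | succ k ih =>
      obtain ⟨c, q, hq, hqlen⟩ := ih
      obtain ⟨u, hu⟩ := exists_adj_of_connected G hconn hedge c
      refine ⟨u, q.concat hu, ?_, by simp [hqlen]; omega⟩
      intro v
      rw [Walk.support_concat]
      exact List.mem_append_left _ (hq v)
  obtain ⟨c, q, hq, hqlen⟩ := ext (ℓ - p.length)
  exact ⟨a, c, q, hq, by omega⟩

lemma idEnc_spec {V : Type*} [DecidableEq V] {ℓ : ℕ} (w : Fin (ℓ + 1) → V)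
    (i j : Fin (ℓ + 1)) (h : (j : ℕ) < (i : ℕ)) :
    idEnc w i ⟨(i : ℕ) - (j : ℕ) - 1, by omega⟩ = decide (w i = w j) := by
  unfold idEnc
  rw [decide_eq_decide]
  have hj : (⟨(i : ℕ) - ((i : ℕ) - (j : ℕ) - 1) - 1,
      lt_of_le_of_lt (le_trans (Nat.sub_le _ _) (Nat.sub_le _ _)) i.isLt⟩ : Fin (ℓ + 1)) = j :=
    Fin.ext (by simp; omega)
  rw [hj]
  exact and_iff_right (by simp; omega)

lemma adjEnc_spec {V : Type*} (G : SimpleGraph V) [DecidableRel G.Adj] {ℓ : ℕ}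
    (w : Fin (ℓ + 1) → V) (i j : Fin (ℓ + 1)) (h : (j : ℕ) < (i : ℕ)) :
    adjEnc G w i ⟨(i : ℕ) - (j : ℕ) - 1, by omega⟩ = decide (G.Adj (w i) (w j)) := by
  unfold adjEnc
  rw [decide_eq_decide]
  have hj : (⟨(i : ℕ) - ((i : ℕ) - (j : ℕ) - 1) - 1,
      lt_of_le_of_lt (le_trans (Nat.sub_le _ _) (Nat.sub_le _ _)) i.isLt⟩ : Fin (ℓ + 1)) = j :=
    Fin.ext (by simp; omega)
  rw [hj]
  exact and_iff_right (by simp; omega)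

lemma walkProb_nonneg {V : Type*} [Fintype V] (G : SimpleGraph V) [DecidableRel G.Adj]
    {ℓ : ℕ} (w : Fin (ℓ + 1) → V) : 0 ≤ walkProb G w := by
  unfold walkProb
  refine mul_nonneg (by positivity) (Finset.prod_nonneg fun i _ => ?_)
  split_ifs
  · positivity
  · exact le_refl 0

/-- Core lemma: equal encoding laws yield an adjacency-reflecting injection. -/
lemma exists_injection_of_encLaw_eq
    {V V' : Type*} [Fintype V] [DecidableEq V] [Fintype V'] [DecidableEq V']
    (G : SimpleGraph V) [DecidableRel G.Adj]
    (G' : SimpleGraph V') [DecidableRel G'.Adj]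
    (hconn : G.Connected) (hedge : G.edgeSet.Nonempty)
    (ℓ : ℕ) (hℓ : Fintype.card V * Fintype.card V ≤ ℓ)
    (hlaw : encLaw G ℓ = encLaw G' ℓ) :
    ∃ f : V → V', Function.Injective f ∧ ∀ u v, G.Adj u v ↔ G'.Adj (f u) (f v) := by
  classical
  have hVne : Nonempty V := hconn.nonempty
  obtain ⟨a, b, p, hp, hplen⟩ := exists_covering_walk G hconn hedge ℓ hℓ
  set w : Fin (ℓ + 1) → V := fun i => p.getVert i with hw
  have hwadj : ∀ i : Fin ℓ, G.Adj (w i.castSucc) (w i.succ) := by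
    intro i
    have : (i : ℕ) < p.length := by rw [hplen]; exact i.isLt
    simpa [hw, Fin.coe_castSucc, Fin.val_succ] using p.adj_getVert_succ this
  have hwsurj : ∀ v, ∃ i : Fin (ℓ + 1), w i = v := by
    intro v
    obtain ⟨m, hm, hmle⟩ := Walk.mem_support_iff_exists_getVert.mp (hp v)
    exact ⟨⟨m, by omega⟩, hm⟩
  have hpos : 0 < walkProb G w := by
    unfold walkProb
    have hc : (0 : ℝ) < (Fintype.card V : ℝ) := by
      exact_mod_cast Fintype.card_pos
    refine mul_pos (inv_pos.mpr hc) (Finset.prod_pos fun i _ => ?_)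
    rw [if_pos (hwadj i)]
    refine inv_pos.mpr ?_
    exact_mod_cast G.degree_pos_iff_exists_adj (w i.castSucc) |>.mpr ⟨_, hwadj i⟩
  have hEpos : 0 < encLaw G ℓ (idEnc w, adjEnc G w) := by
    unfold encLaw
    refine Finset.sum_pos' (fun x _ => ?_) ⟨w, Finset.mem_univ w, ?_⟩
    · split_ifs
      · exact walkProb_nonneg G x
      · exact le_refl 0
    · rw [if_pos rfl]; exact hpos
  rw [hlaw] at hEpos
  have hex : ∃ w' : Fin (ℓ + 1) → V',
      (idEnc w', adjEnc G' w') = (idEnc w, adjEnc G w) := by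
    by_contra h
    push_neg at h
    have : encLaw G' ℓ (idEnc w, adjEnc G w) = 0 := by
      unfold encLaw
      refine Finset.sum_eq_zero fun x _ => ?_
      rw [if_neg (h x)]
    linarith
  obtain ⟨w', henc⟩ := hex
  have hid : idEnc w' = idEnc w := congrArg Prod.fst henc
  have hadj : adjEnc G' w' = adjEnc G w := congrArg Prod.snd henc
  -- key extraction
  have keyid : ∀ i j : Fin (ℓ + 1), (j : ℕ) < (i : ℕ) → (w i = w j ↔ w' i = w' j) := by
    intro i j h
    have h1 := idEnc_spec w i j h
    have h2 := idEnc_spec w' i j h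
    rw [← congrFun (congrFun hid i) (⟨(i : ℕ) - (j : ℕ) - 1, by omega⟩ : Fin ℓ)] at h1
    rw [h2] at h1
    rw [decide_eq_decide] at h1
    exact h1.symm
  have keyadj : ∀ i j : Fin (ℓ + 1), (j : ℕ) < (i : ℕ) →
      (G.Adj (w i) (w j) ↔ G'.Adj (w' i) (w' j)) := by
    intro i j h
    have h1 := adjEnc_spec G w i j h
    have h2 := adjEnc_spec G' w' i j h
    rw [← congrFun (congrFun hadj i) (⟨(i : ℕ) - (j : ℕ) - 1, by omega⟩ : Fin ℓ)] at h1
    rw [h2] at h1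
    rw [decide_eq_decide] at h1
    exact h1.symm
  have keyid' : ∀ i j : Fin (ℓ + 1), (w i = w j ↔ w' i = w' j) := by
    intro i j
    rcases lt_trichotomy (j : ℕ) (i : ℕ) with h | h | h
    · exact keyid i j h
    · have : i = j := Fin.ext h.symm
      subst this; simp
    · rw [eq_comm, keyid j i h, eq_comm]
  have keyadj' : ∀ i j : Fin (ℓ + 1), (G.Adj (w i) (w j) ↔ G'.Adj (w' i) (w' j)) := by
    intro i j
    rcases lt_trichotomy (j : ℕ) (i : ℕ) with h | h | h
    · exact keyadj i j h
    · have : i = j := Fin.ext h.symm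
      subst this
      simp
    · rw [adj_comm, keyadj j i h, adj_comm]
  choose g hg using hwsurj
  refine ⟨fun v => w' (g v), ?_, ?_⟩
  · intro u v huv
    have := (keyid' (g u) (g v)).mpr huv
    rw [hg u, hg v] at this
    exact this
  · intro u v
    have := keyadj' (g u) (g v)
    rw [hg u, hg v] at this
    exact this

/-- If two finite connected simple graphs with at least one edge and at most `n`
vertices induce the same law of walk encodings for walks of length `ℓ ≥ 4n³`, then
they are isomorphic. -/
theorem iso_of_encLaw_eq
    {V V' : Type*} [Fintype V] [DecidableEq V] [Fintype V'] [DecidableEq V']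
    (G : SimpleGraph V) [DecidableRel G.Adj]
    (G' : SimpleGraph V') [DecidableRel G'.Adj]
    (n : ℕ) (hn : 1 ≤ n)
    (hcard : Fintype.card V ≤ n) (hcard' : Fintype.card V' ≤ n)
    (hconn : G.Connected) (hconn' : G'.Connected)
    (hedge : G.edgeSet.Nonempty) (hedge' : G'.edgeSet.Nonempty)
    (ℓ : ℕ) (hℓ : 4 * n ^ 3 ≤ ℓ)
    (hlaw : encLaw G ℓ = encLaw G' ℓ) :
    Nonempty (G ≃g G') := by
  have hnn : n * n ≤ ℓ := by nlinarith
  have hℓ1 : Fintype.card V * Fintype.card V ≤ ℓ :=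
    le_trans (Nat.mul_le_mul hcard hcard) hnn
  have hℓ2 : Fintype.card V' * Fintype.card V' ≤ ℓ :=
    le_trans (Nat.mul_le_mul hcard' hcard') hnn
  obtain ⟨f, hfinj, hfadj⟩ :=
    exists_injection_of_encLaw_eq G G' hconn hedge ℓ hℓ1 hlaw
  obtain ⟨f', hf'inj, _⟩ :=
    exists_injection_of_encLaw_eq G' G hconn' hedge' ℓ hℓ2 hlaw.symm
  have hc1 : Fintype.card V ≤ Fintype.card V' := Fintype.card_le_of_injective f hfinj
  have hc2 : Fintype.card V' ≤ Fintype.card V := Fintype.card_le_of_injective f' hf'inj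
  have hbij : Function.Bijective f :=
    (Fintype.bijective_iff_injective_and_card f).mpr ⟨hfinj, le_antisymm hc1 hc2⟩
  exact ⟨⟨Equiv.ofBijective f hbij, fun {u v} => (hfadj u v).symm⟩⟩
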